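/- For λ > 2 and λ⁻¹ < δ < 1, the number of lattice points k ∈ ℤ² with λ − δ < |k| < λ + δ is at most C(ε) λ^{1+ε} δ for every ε > 0. -/

import Mathlib

open Zsqrtd UniqueFactorizationMonoid Finset

noncomputable instance : NormalizationMonoid GaussianInt :=
  (UniqueFactorizationMonoid.normalizationMonoid : StrongNormalizationMonoid GaussianInt).toNormalizationMonoid

namespace Stmt2Aux

lemma card4 {α : Type*} [DecidableEq α] (a b c d : α) :
    ({a, b, c, d} : Finset α).card ≤ 4 := by
  refine le_trans (Finset.card_insert_le _ _) (Nat.succ_le_succ ?_)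
  refine le_trans (Finset.card_insert_le _ _) (Nat.succ_le_succ ?_)
  refine le_trans (Finset.card_insert_le _ _) (Nat.succ_le_succ ?_)
  simp

/-- The number of distinct sub-multisets of `F` is at most `∏ (count + 1)`. -/
lemma card_powerset_toFinset {α : Type*} [DecidableEq α] (F : Multiset α) :
    F.powerset.toFinset.card ≤ ∏ P ∈ F.toFinset, (F.count P + 1) := by
  classical
  have h := Finset.card_le_card_of_injOn
      (s := F.powerset.toFinset)
      (t := F.toFinset.pi (fun P => Finset.range (F.count P + 1)))
      (fun s => fun P _ => s.count P) ?_ ?_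
  · simpa [Finset.card_pi] using h
  · intro s hs
    rw [Finset.mem_coe, Multiset.mem_toFinset, Multiset.mem_powerset] at hs
    rw [Finset.mem_coe, Finset.mem_pi]
    intro P _
    simp [Nat.lt_succ_iff, Multiset.count_le_of_le P hs]
  · intro s hs t ht hst
    rw [Finset.mem_coe, Multiset.mem_toFinset, Multiset.mem_powerset] at hs ht
    ext a
    by_cases ha : a ∈ F.toFinset
    · exact congrFun (congrFun hst a) ha
    · rw [Multiset.mem_toFinset] at ha
      have hF : F.count a = 0 := Multiset.count_eq_zero_of_notMem ha
      have h1 : s.count a = 0 :=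
        Nat.le_zero.mp (hF ▸ Multiset.count_le_of_le a hs)
      have h2 : t.count a = 0 :=
        Nat.le_zero.mp (hF ▸ Multiset.count_le_of_le a ht)
      rw [h1, h2]

lemma unit_eq (u : GaussianInt) (hu : IsUnit u) :
    u = 1 ∨ u = -1 ∨ u = ⟨0, 1⟩ ∨ u = ⟨0, -1⟩ := by
  have h1 : u.norm = 1 := by
    rwa [Zsqrtd.norm_eq_one_iff' (by norm_num : (-1 : ℤ) ≤ 0)]
  rw [Zsqrtd.norm_def] at h1
  have h2 : u.re * u.re + u.im * u.im = 1 := by linarith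
  have hre : -1 ≤ u.re ∧ u.re ≤ 1 := by
    constructor <;> nlinarith [mul_self_nonneg u.im, mul_self_nonneg (u.re + 1), mul_self_nonneg (u.re - 1)]
  have him : -1 ≤ u.im ∧ u.im ≤ 1 := by
    constructor <;> nlinarith [mul_self_nonneg u.re, mul_self_nonneg (u.im + 1), mul_self_nonneg (u.im - 1)]
  have hre3 : u.re = -1 ∨ u.re = 0 ∨ u.re = 1 := by omega
  have him3 : u.im = -1 ∨ u.im = 0 ∨ u.im = 1 := by omega
  rcases hre3 with h | h | h <;> rcases him3 with h' | h' | h' <;>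
    rw [h, h'] at h2 <;> norm_num at h2
  · right; left; ext <;> simp [h, h']
  · right; right; right; ext <;> simp [h, h']
  · right; right; left; ext <;> simp [h, h']
  · left; ext <;> simp [h, h']

lemma associated_cases (p q : GaussianInt) (h : Associated p q) :
    q = p ∨ q = -p ∨ q = p * ⟨0, 1⟩ ∨ q = p * ⟨0, -1⟩ := by
  obtain ⟨u, hu⟩ := h
  rcases unit_eq (u : GaussianInt) u.isUnit with h1 | h1 | h1 | h1 <;>
    rw [← hu, h1]
  · left; simp
  · right; left; simp
  · right; right; left; rfl
  · right; right; right; rfl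

/-- The finset of representations of `n` as a sum of two squares. -/
noncomputable def reps (n : ℕ) : Finset (ℤ × ℤ) :=
  ((Finset.Icc (-(n : ℤ)) (n : ℤ)) ×ˢ (Finset.Icc (-(n : ℤ)) (n : ℤ))).filter
    (fun p => p.1 ^ 2 + p.2 ^ 2 = (n : ℤ))

lemma mem_reps {n : ℕ} {p : ℤ × ℤ} :
    p ∈ reps n ↔ p.1 ^ 2 + p.2 ^ 2 = (n : ℤ) := by
  constructor
  · intro h; exact (Finset.mem_filter.mp h).2
  · intro h
    have hn0 : (0 : ℤ) ≤ (n : ℤ) := Int.natCast_nonneg n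
    refine Finset.mem_filter.mpr ⟨?_, h⟩
    rw [Finset.mem_product]
    constructor <;> rw [Finset.mem_Icc] <;> constructor
    · by_contra hc; push_neg at hc
      have : p.1 + (n : ℤ) + 1 ≤ 0 := by omega
      nlinarith [sq_nonneg p.2, sq_nonneg (p.1 + (n : ℤ) + 1)]
    · by_contra hc; push_neg at hc
      have : (n : ℤ) + 1 - p.1 ≤ 0 := by omega
      nlinarith [sq_nonneg p.2, sq_nonneg (p.1 - (n : ℤ) - 1)]
    · by_contra hc; push_neg at hc
      have : p.2 + (n : ℤ) + 1 ≤ 0 := by omega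
      nlinarith [sq_nonneg p.1, sq_nonneg (p.2 + (n : ℤ) + 1)]
    · by_contra hc; push_neg at hc
      have : (n : ℤ) + 1 - p.2 ≤ 0 := by omega
      nlinarith [sq_nonneg p.1, sq_nonneg (p.2 - (n : ℤ) - 1)]

/-- The Gaussian integer associated to a pair. -/
def gz (p : ℤ × ℤ) : GaussianInt := ⟨p.1, p.2⟩

lemma gz_norm (p : ℤ × ℤ) : (gz p).norm = p.1 ^ 2 + p.2 ^ 2 := by
  rw [Zsqrtd.norm_def]; simp [gz]; ring

noncomputable def gprod (n : ℕ) : Multiset GaussianInt :=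
  normalizedFactors ((n : ℤ) : GaussianInt)

lemma N_ne_zero {n : ℕ} (hn : n ≠ 0) : ((n : ℤ) : GaussianInt) ≠ 0 := by
  intro h
  have := congrArg Zsqrtd.norm h
  rw [Zsqrtd.norm_intCast] at this
  simp at this
  exact hn (by exact_mod_cast this)

lemma gz_ne_zero {n : ℕ} (hn : n ≠ 0) {p : ℤ × ℤ} (hp : p ∈ reps n) : gz p ≠ 0 := by
  intro h
  have := gz_norm p
  rw [h, Zsqrtd.norm_zero, mem_reps.mp hp] at this
  exact hn (by exact_mod_cast this.symm)

lemma gz_dvd {n : ℕ} {p : ℤ × ℤ} (hp : p ∈ reps n) : gz p ∣ ((n : ℤ) : GaussianInt) := by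
  refine ⟨star (gz p), ?_⟩
  have := Zsqrtd.norm_eq_mul_conj (gz p)
  rw [gz_norm, mem_reps.mp hp] at this
  exact this

lemma reps_card_le (n : ℕ) (hn : n ≠ 0) :
    (reps n).card ≤ 4 * ∏ P ∈ (gprod n).toFinset, ((gprod n).count P + 1) := by
  classical
  have hN := N_ne_zero hn
  set f : ℤ × ℤ → Multiset GaussianInt := fun p => normalizedFactors (gz p) with hf
  have himg : ((reps n).image f).card ≤ ∏ P ∈ (gprod n).toFinset, ((gprod n).count P + 1) := by
    refine le_trans (Finset.card_le_card ?_) (card_powerset_toFinset (gprod n))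
    intro s hs
    obtain ⟨p, hp, rfl⟩ := Finset.mem_image.mp hs
    rw [Multiset.mem_toFinset, Multiset.mem_powerset]
    exact (dvd_iff_normalizedFactors_le_normalizedFactors (gz_ne_zero hn hp) hN).mp (gz_dvd hp)
  refine le_trans (Finset.card_le_mul_card_image (f := f) (reps n) 4 ?_) (Nat.mul_le_mul_left 4 himg)
  intro a ha
  obtain ⟨p₀, hp₀, hfp₀⟩ := Finset.mem_image.mp ha
  refine le_trans (Finset.card_le_card ?_)
    (card4 p₀ (-p₀.1, -p₀.2) (-p₀.2, p₀.1) (p₀.2, -p₀.1))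
  intro q hq
  rw [Finset.mem_filter] at hq
  obtain ⟨hq1, hq2⟩ := hq
  have hassoc : Associated (gz p₀) (gz q) := by
    have h1 := prod_normalizedFactors (gz_ne_zero hn hp₀)
    have h2 := prod_normalizedFactors (gz_ne_zero hn hq1)
    have h1' : Associated a.prod (gz p₀) := hfp₀ ▸ h1
    have h2' : Associated a.prod (gz q) := hq2 ▸ h2
    exact h1'.symm.trans h2'
  have key : gz q = gz p₀ ∨ gz q = -gz p₀ ∨ gz q = gz p₀ * ⟨0, 1⟩ ∨ gz q = gz p₀ * ⟨0, -1⟩ :=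
    associated_cases _ _ hassoc
  have hre : ∀ z : GaussianInt, ∀ x y : ℤ, z = ⟨x, y⟩ → z.re = x ∧ z.im = y := by
    intro z x y h; rw [h]; exact ⟨rfl, rfl⟩
  simp only [Finset.mem_insert, Finset.mem_singleton]
  have hq_eq : q = (gz q |>.re, gz q |>.im) := rfl
  rcases key with h | h | h | h
  · left
    rw [hq_eq, h]; rfl
  · right; left
    rw [hq_eq, h]
    ext <;> simp [gz]
  · right; right; left
    rw [hq_eq, h]
    ext <;> simp [gz, Zsqrtd.re_mul, Zsqrtd.im_mul]
  · right; right; right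
    rw [hq_eq, h]
    ext <;> simp [gz, Zsqrtd.re_mul, Zsqrtd.im_mul]

/-- `norm.natAbs` multiplied over the normalized factors gives `n ^ 2`. -/
lemma prod_norm (n : ℕ) (hn : n ≠ 0) :
    ∏ P ∈ (gprod n).toFinset, P.norm.natAbs ^ ((gprod n).count P) = n ^ 2 := by
  classical
  have hN := N_ne_zero hn
  set h : GaussianInt →* ℕ := Int.natAbsHom.toMonoidHom.comp Zsqrtd.normMonoidHom with hh
  have h1 : ∏ P ∈ (gprod n).toFinset, P.norm.natAbs ^ ((gprod n).count P)
      = ((gprod n).map h).prod := by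
    rw [Finset.prod_multiset_map_count]
    rfl
  have h2 : ((gprod n).map h).prod = h ((gprod n).prod) := (h.map_multiset_prod _).symm
  obtain ⟨u, hu⟩ := prod_normalizedFactors hN
  have h3 : h ((gprod n).prod) * h (u : GaussianInt) = h (((n : ℤ) : GaussianInt)) := by
    rw [← h.map_mul]
    simp only [gprod]
    rw [hu]
  have h4 : h (u : GaussianInt) = 1 := Zsqrtd.norm_eq_one_iff.mpr u.isUnit
  have h5 : h (((n : ℤ) : GaussianInt)) = n ^ 2 := by
    show ((((n : ℤ) : GaussianInt)).norm).natAbs = n ^ 2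
    rw [Zsqrtd.norm_intCast]
    rw [Int.natAbs_mul]
    simp [sq]
  rw [h1, h2]
  rw [h4, mul_one] at h3
  rw [h3, h5]

lemma norm_two_le {P : GaussianInt} (hP : Prime P) : 2 ≤ P.norm.natAbs := by
  have h0 : P.norm.natAbs ≠ 0 := by
    intro h
    have h' : P.norm = 0 := Int.natAbs_eq_zero.mp h
    rw [Zsqrtd.norm_eq_zero_iff (by norm_num : (-1 : ℤ) < 0)] at h'
    exact hP.ne_zero h'
  have h1 : P.norm.natAbs ≠ 1 := fun h => hP.not_unit (Zsqrtd.norm_eq_one_iff.mp h)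
  omega

lemma pow_rpow_comm {x : ℝ} (hx : 0 ≤ x) (r : ℝ) (c : ℕ) :
    (x ^ c) ^ r = (x ^ r) ^ c := by
  rw [← Real.rpow_natCast x c, ← Real.rpow_mul hx, mul_comm, Real.rpow_mul hx,
    Real.rpow_natCast]

lemma prod_bound (ε : ℝ) (hε : 0 < ε) :
    ∃ C : ℝ, 0 < C ∧ ∀ n : ℕ, n ≠ 0 →
      ((∏ P ∈ (gprod n).toFinset, ((gprod n).count P + 1) : ℕ) : ℝ) ≤ C * (n : ℝ) ^ ε := by
  classical
  set a : ℝ := ε / 2 * Real.log 2 with ha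
  have ha0 : 0 < a := mul_pos (by positivity) (Real.log_pos (by norm_num))
  set B : ℝ := max 1 a⁻¹ with hB
  have hB1 : (1 : ℝ) ≤ B := le_max_left _ _
  have hBa : (1 : ℝ) ≤ B * a := by
    calc (1 : ℝ) = a⁻¹ * a := by field_simp
    _ ≤ B * a := by
      apply mul_le_mul_of_nonneg_right (le_max_right _ _) ha0.le
  set K : ℕ := ⌈(2 : ℝ) ^ (2 / ε)⌉₊ with hK
  set M : ℕ := (2 * K + 1) ^ 2 with hM
  refine ⟨B ^ M, by positivity, ?_⟩
  intro n hn
  set F := gprod n with hF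
  set T := F.toFinset with hT
  have hprime : ∀ P ∈ T, 2 ≤ P.norm.natAbs := by
    intro P hP
    rw [hT, hF, Multiset.mem_toFinset] at hP
    exact norm_two_le (prime_of_normalized_factor P hP)
  -- pointwise bound
  have key : ∀ P ∈ T, ((F.count P : ℝ) + 1) ≤
      (if ((P.norm.natAbs : ℝ)) ^ (ε / 2) < 2 then B else 1) *
        (((P.norm.natAbs : ℝ)) ^ (F.count P)) ^ (ε / 2) := by
    intro P hP
    set c : ℕ := F.count P with hc
    set N : ℝ := (P.norm.natAbs : ℝ) with hNr
    have hN2 : (2 : ℝ) ≤ N := by rw [hNr]; exact_mod_cast hprime P hP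
    have hN0 : (0 : ℝ) ≤ N := by linarith
    rw [pow_rpow_comm hN0]
    by_cases hsm : N ^ (ε / 2) < 2
    · rw [if_pos hsm]
      have e1 : (c : ℝ) * a + 1 ≤ Real.exp ((c : ℝ) * a) := Real.add_one_le_exp _
      have e2 : (c : ℝ) + 1 ≤ B * ((c : ℝ) * a + 1) := by
        nlinarith [Nat.cast_nonneg (α := ℝ) c]
      have e3 : Real.exp ((c : ℝ) * a) = ((2 : ℝ) ^ (ε / 2)) ^ c := by
        rw [← Real.rpow_natCast ((2:ℝ) ^ (ε/2)) c, ← Real.rpow_mul (by norm_num),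
          Real.rpow_def_of_pos (by norm_num : (0:ℝ) < 2)]
        congr 1
        rw [ha]; ring
      have e4 : ((2 : ℝ) ^ (ε / 2)) ^ c ≤ (N ^ (ε / 2)) ^ c := by
        apply pow_le_pow_left₀ (Real.rpow_nonneg (by norm_num) _)
        exact Real.rpow_le_rpow (by norm_num) hN2 (by positivity)
      calc (c : ℝ) + 1 ≤ B * ((c : ℝ) * a + 1) := e2
        _ ≤ B * Real.exp ((c : ℝ) * a) := by
            apply mul_le_mul_of_nonneg_left e1 (by linarith)
        _ = B * ((2 : ℝ) ^ (ε / 2)) ^ c := by rw [e3]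
        _ ≤ B * (N ^ (ε / 2)) ^ c := by
            apply mul_le_mul_of_nonneg_left e4 (by linarith)
    · rw [if_neg hsm]
      push_neg at hsm
      rw [one_mul]
      have e1 : (c : ℝ) + 1 ≤ (2 : ℝ) ^ c := by
        have := Nat.lt_two_pow_self (n := c)
        exact_mod_cast Nat.succ_le_of_lt this
      calc (c : ℝ) + 1 ≤ (2 : ℝ) ^ c := e1
        _ ≤ (N ^ (ε / 2)) ^ c := pow_le_pow_left₀ (by norm_num) hsm c
  -- number of "small" primes is bounded
  have hsmallcard : (T.filter (fun P => ((P.norm.natAbs : ℝ)) ^ (ε / 2) < 2)).card ≤ M := by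
    have hle : ∀ P ∈ T.filter (fun P => ((P.norm.natAbs : ℝ)) ^ (ε / 2) < 2),
        -(K : ℤ) ≤ P.re ∧ P.re ≤ K ∧ -(K : ℤ) ≤ P.im ∧ P.im ≤ K := by
      intro P hP
      rw [Finset.mem_filter] at hP
      obtain ⟨hPT, hPs⟩ := hP
      have hN2 : (2 : ℝ) ≤ (P.norm.natAbs : ℝ) := by exact_mod_cast hprime P hPT
      have hNK : (P.norm.natAbs : ℝ) ≤ K := by
        have h1 : ((P.norm.natAbs : ℝ)) = (((P.norm.natAbs : ℝ)) ^ (ε / 2)) ^ (2 / ε) := by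
          rw [← Real.rpow_mul (by linarith)]
          rw [show ε / 2 * (2 / ε) = 1 by field_simp]
          exact (Real.rpow_one _).symm
        have h2 : (((P.norm.natAbs : ℝ)) ^ (ε / 2)) ^ (2 / ε) ≤ (2 : ℝ) ^ (2 / ε) :=
          Real.rpow_le_rpow (Real.rpow_nonneg (by linarith) _) hPs.le (by positivity)
        calc ((P.norm.natAbs : ℝ)) = _ := h1
          _ ≤ (2 : ℝ) ^ (2 / ε) := h2
          _ ≤ K := Nat.le_ceil _
      have hKnat : P.norm.natAbs ≤ K := by exact_mod_cast hNK
      have hnormK : P.re * P.re + P.im * P.im ≤ (K : ℤ) := by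
        have h3 : P.norm = (P.norm.natAbs : ℤ) :=
          (Int.natAbs_of_nonneg (GaussianInt.norm_nonneg P)).symm
        have h4 : P.norm = P.re * P.re + P.im * P.im := by
          rw [Zsqrtd.norm_def]; ring
        rw [← h4, h3]
        exact_mod_cast hKnat
      refine ⟨?_, ?_, ?_, ?_⟩
      · by_contra hcon; push_neg at hcon
        have : P.re + (K : ℤ) + 1 ≤ 0 := by omega
        nlinarith [mul_self_nonneg P.im, mul_self_nonneg (P.re + (K : ℤ) + 1),
          Int.natCast_nonneg K]
      · by_contra hcon; push_neg at hcon
        have : (K : ℤ) + 1 - P.re ≤ 0 := by omega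
        nlinarith [mul_self_nonneg P.im, mul_self_nonneg (P.re - (K : ℤ) - 1),
          Int.natCast_nonneg K]
      · by_contra hcon; push_neg at hcon
        have : P.im + (K : ℤ) + 1 ≤ 0 := by omega
        nlinarith [mul_self_nonneg P.re, mul_self_nonneg (P.im + (K : ℤ) + 1),
          Int.natCast_nonneg K]
      · by_contra hcon; push_neg at hcon
        have : (K : ℤ) + 1 - P.im ≤ 0 := by omega
        nlinarith [mul_self_nonneg P.re, mul_self_nonneg (P.im - (K : ℤ) - 1),
          Int.natCast_nonneg K]
    have hinj : Set.InjOn (fun P : GaussianInt => (P.re, P.im))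
        ↑(T.filter (fun P => ((P.norm.natAbs : ℝ)) ^ (ε / 2) < 2)) := by
      intro x _ y _ hxy
      have h1 : x.re = y.re := congrArg Prod.fst hxy
      have h2 : x.im = y.im := congrArg Prod.snd hxy
      ext <;> assumption
    have hcard := Finset.card_le_card_of_injOn (fun P : GaussianInt => (P.re, P.im))
        (t := (Finset.Icc (-(K : ℤ)) (K : ℤ)) ×ˢ (Finset.Icc (-(K : ℤ)) (K : ℤ)))
        (fun P hP => by
          obtain ⟨u1, u2, u3, u4⟩ := hle P hP
          rw [Finset.mem_coe, Finset.mem_product]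
          exact ⟨Finset.mem_Icc.mpr ⟨u1, u2⟩, Finset.mem_Icc.mpr ⟨u3, u4⟩⟩) hinj
    refine le_trans hcard ?_
    rw [Finset.card_product, Int.card_Icc]
    have : ((K : ℤ) + 1 - -(K : ℤ)).toNat = 2 * K + 1 := by omega
    rw [this, hM]
    exact Nat.le_of_eq (by ring)
  have step1 : ((∏ P ∈ T, (F.count P + 1) : ℕ) : ℝ) ≤
      (∏ P ∈ T, (if ((P.norm.natAbs : ℝ)) ^ (ε / 2) < 2 then B else 1)) *
      ∏ P ∈ T, (((P.norm.natAbs : ℝ)) ^ (F.count P)) ^ (ε / 2) := by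
    rw [← Finset.prod_mul_distrib]
    push_cast
    exact Finset.prod_le_prod (fun P _ => by positivity) key
  have step2 : (∏ P ∈ T, (if ((P.norm.natAbs : ℝ)) ^ (ε / 2) < 2 then B else 1)) ≤ B ^ M := by
    rw [Finset.prod_ite, Finset.prod_const, Finset.prod_const, one_pow, mul_one]
    exact pow_le_pow_right₀ hB1 hsmallcard
  have step3 : (∏ P ∈ T, (((P.norm.natAbs : ℝ)) ^ (F.count P)) ^ (ε / 2)) = (n : ℝ) ^ ε := by
    rw [Real.finset_prod_rpow T _ (fun P _ => by positivity) (ε / 2)]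
    have hcast : (∏ P ∈ T, ((P.norm.natAbs : ℝ)) ^ (F.count P)) = ((n : ℝ)) ^ (2 : ℕ) := by
      calc ∏ P ∈ T, ((P.norm.natAbs : ℝ)) ^ (F.count P)
          = ((∏ P ∈ T, P.norm.natAbs ^ (F.count P) : ℕ) : ℝ) := by push_cast; rfl
        _ = ((n ^ 2 : ℕ) : ℝ) := by
            rw [hT, hF, prod_norm n hn]
        _ = ((n : ℝ)) ^ (2 : ℕ) := by push_cast; rfl
    rw [hcast, ← Real.rpow_natCast ((n : ℝ)) 2, ← Real.rpow_mul (Nat.cast_nonneg n)]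
    norm_num
    congr 1
    ring
  calc ((∏ P ∈ T, (F.count P + 1) : ℕ) : ℝ)
      ≤ (∏ P ∈ T, (if ((P.norm.natAbs : ℝ)) ^ (ε / 2) < 2 then B else 1)) *
        ∏ P ∈ T, (((P.norm.natAbs : ℝ)) ^ (F.count P)) ^ (ε / 2) := step1
    _ ≤ B ^ M * ∏ P ∈ T, (((P.norm.natAbs : ℝ)) ^ (F.count P)) ^ (ε / 2) := by
        apply mul_le_mul_of_nonneg_right step2
        apply Finset.prod_nonneg
        intro P _
        positivity
    _ = B ^ M * (n : ℝ) ^ ε := by rw [step3]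

lemma reps_bound (ε : ℝ) (hε : 0 < ε) :
    ∃ C : ℝ, 0 < C ∧ ∀ n : ℕ, n ≠ 0 → ((reps n).card : ℝ) ≤ C * (n : ℝ) ^ ε := by
  obtain ⟨C, hC, hbound⟩ := prod_bound ε hε
  refine ⟨4 * C, by positivity, ?_⟩
  intro n hn
  have h1 := reps_card_le n hn
  have h2 := hbound n hn
  calc ((reps n).card : ℝ)
      ≤ 4 * ((∏ P ∈ (gprod n).toFinset, ((gprod n).count P + 1) : ℕ) : ℝ) := by
        exact_mod_cast h1
    _ ≤ 4 * (C * (n : ℝ) ^ ε) := by linarith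
    _ = 4 * C * (n : ℝ) ^ ε := by ring

end Stmt2Aux

/-- for `λ > 2` and `λ⁻¹ < δ < 1`, the number of lattice points in the
annulus `λ - δ < |k| < λ + δ` is at most `C(ε) λ^{1+ε} δ`. -/
theorem stmt2 :
    ∀ ε : ℝ, 0 < ε → ∃ C : ℝ, 0 < C ∧
      ∀ lam δ : ℝ, 2 < lam → lam⁻¹ < δ → δ < 1 →
        ({k : ℤ × ℤ |
            lam - δ < Real.sqrt ((k.1 : ℝ) ^ 2 + (k.2 : ℝ) ^ 2) ∧
            Real.sqrt ((k.1 : ℝ) ^ 2 + (k.2 : ℝ) ^ 2) < lam + δ}.ncard : ℝ)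
          ≤ C * lam ^ (1 + ε) * δ := by
  intro ε hε
  obtain ⟨C₁, hC₁, hbound⟩ := Stmt2Aux.reps_bound (ε / 2) (by positivity)
  refine ⟨5 * C₁ * (2 : ℝ) ^ ε, by positivity, ?_⟩
  intro lam δ hlam hδ1 hδ2
  have hlam0 : (0 : ℝ) < lam := by linarith
  have hδ0 : 0 < δ := lt_trans (inv_pos.mpr hlam0) hδ1
  have hld : 1 < lam * δ := by
    have h := mul_lt_mul_of_pos_left hδ1 hlam0
    rwa [mul_inv_cancel₀ (ne_of_gt hlam0)] at h
  have hml : 1 < lam - δ := by linarith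
  set A : Set (ℤ × ℤ) := {k : ℤ × ℤ |
      lam - δ < Real.sqrt ((k.1 : ℝ) ^ 2 + (k.2 : ℝ) ^ 2) ∧
      Real.sqrt ((k.1 : ℝ) ^ 2 + (k.2 : ℝ) ^ 2) < lam + δ} with hA
  set a : ℕ := ⌊(lam - δ) ^ 2⌋₊ with haa
  set b : ℕ := ⌊(lam + δ) ^ 2⌋₊ with hbb
  set I : Finset ℕ := Finset.Ioc a b with hI
  have hsub : A ⊆ ↑(I.biUnion (fun n => Stmt2Aux.reps n)) := by
    intro k hk
    obtain ⟨hk1, hk2⟩ := hk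
    set s : ℝ := (k.1 : ℝ) ^ 2 + (k.2 : ℝ) ^ 2 with hs
    have hs0 : 0 ≤ s := by positivity
    have hr : Real.sqrt s ^ 2 = s := Real.sq_sqrt hs0
    have hgt : (lam - δ) ^ 2 < s := by
      calc (lam - δ) ^ 2 < Real.sqrt s ^ 2 :=
        pow_lt_pow_left₀ hk1 (by linarith) (two_ne_zero)
      _ = s := hr
    have hlt : s < (lam + δ) ^ 2 := by
      calc s = Real.sqrt s ^ 2 := hr.symm
      _ < (lam + δ) ^ 2 := pow_lt_pow_left₀ hk2 (Real.sqrt_nonneg s) (two_ne_zero)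
    set n : ℕ := (k.1 ^ 2 + k.2 ^ 2).toNat with hnn
    have hnz : (k.1 ^ 2 + k.2 ^ 2 : ℤ) = (n : ℤ) := (Int.toNat_of_nonneg (by positivity)).symm
    have hns : ((n : ℝ)) = s := by
      rw [hs]
      have := congrArg (fun z : ℤ => (z : ℝ)) hnz
      push_cast at this
      linarith [this]
    rw [Finset.mem_coe, Finset.mem_biUnion]
    refine ⟨n, ?_, Stmt2Aux.mem_reps.mpr hnz⟩
    rw [Finset.mem_Ioc]
    constructor
    · rw [haa, Nat.floor_lt (by positivity)]
      rw [hns]; exact hgt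
    · exact Nat.le_floor (by rw [hns]; linarith)
  have hcard1 : (A.ncard : ℝ) ≤ ((I.biUnion (fun n => Stmt2Aux.reps n)).card : ℝ) := by
    have h := Set.ncard_le_ncard hsub (Finset.finite_toSet _)
    rw [Set.ncard_coe_finset] at h
    exact_mod_cast h
  have hcardI : ((I.card : ℕ) : ℝ) ≤ 5 * (lam * δ) := by
    have hcI : I.card = b - a := Nat.card_Ioc a b
    rcases le_or_gt a b with hab | hab
    · have hbr : (b : ℝ) ≤ (lam + δ) ^ 2 := Nat.floor_le (by positivity)
      have har : (lam - δ) ^ 2 < (a : ℝ) + 1 := Nat.lt_floor_add_one _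
      rw [hcI]
      rw [Nat.cast_sub hab]
      nlinarith
    · rw [hcI, Nat.sub_eq_zero_of_le (le_of_lt hab)]
      simp
      positivity
  have h4e : (4 : ℝ) ^ (ε / 2) = (2 : ℝ) ^ ε := by
    rw [show (4 : ℝ) = (2 : ℝ) ^ (2 : ℕ) by norm_num, ← Real.rpow_natCast ((2 : ℝ)) 2,
      ← Real.rpow_mul (by norm_num)]
    norm_num
    congr 1
    ring
  have hle : (lam ^ (2 : ℕ)) ^ (ε / 2) = lam ^ ε := by
    rw [← Real.rpow_natCast lam 2, ← Real.rpow_mul hlam0.le]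
    norm_num
    congr 1
    ring
  have hsum : ((I.biUnion (fun n => Stmt2Aux.reps n)).card : ℝ) ≤
      (I.card : ℝ) * (C₁ * ((2 : ℝ) ^ ε * lam ^ ε)) := by
    have hbi : ((I.biUnion (fun n => Stmt2Aux.reps n)).card : ℝ) ≤
        ((∑ n ∈ I, (Stmt2Aux.reps n).card : ℕ) : ℝ) := by
      exact_mod_cast Finset.card_biUnion_le
    have hterm : ∀ n ∈ I, ((Stmt2Aux.reps n).card : ℝ) ≤ C₁ * ((2 : ℝ) ^ ε * lam ^ ε) := by
      intro n hn
      rw [hI, Finset.mem_Ioc] at hn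
      have hn0 : n ≠ 0 := by omega
      have hb1 := hbound n hn0
      have hnb : (n : ℝ) ≤ 4 * lam ^ (2 : ℕ) := by
        have h1 : (n : ℝ) ≤ (b : ℝ) := by exact_mod_cast hn.2
        have h2 : (b : ℝ) ≤ (lam + δ) ^ 2 := Nat.floor_le (by positivity)
        nlinarith
      have hpow : (n : ℝ) ^ (ε / 2) ≤ (2 : ℝ) ^ ε * lam ^ ε := by
        calc (n : ℝ) ^ (ε / 2) ≤ (4 * lam ^ (2 : ℕ)) ^ (ε / 2) :=
          Real.rpow_le_rpow (Nat.cast_nonneg n) hnb (by positivity)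
        _ = (4 : ℝ) ^ (ε / 2) * (lam ^ (2 : ℕ)) ^ (ε / 2) :=
          Real.mul_rpow (by norm_num) (by positivity)
        _ = (2 : ℝ) ^ ε * lam ^ ε := by rw [h4e, hle]
      calc ((Stmt2Aux.reps n).card : ℝ) ≤ C₁ * (n : ℝ) ^ (ε / 2) := hb1
        _ ≤ C₁ * ((2 : ℝ) ^ ε * lam ^ ε) := mul_le_mul_of_nonneg_left hpow hC₁.le
    calc ((I.biUnion (fun n => Stmt2Aux.reps n)).card : ℝ)
        ≤ ((∑ n ∈ I, (Stmt2Aux.reps n).card : ℕ) : ℝ) := hbi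
      _ = ∑ n ∈ I, ((Stmt2Aux.reps n).card : ℝ) := by push_cast; rfl
      _ ≤ ∑ n ∈ I, (C₁ * ((2 : ℝ) ^ ε * lam ^ ε)) := Finset.sum_le_sum hterm
      _ = (I.card : ℝ) * (C₁ * ((2 : ℝ) ^ ε * lam ^ ε)) := by
          rw [Finset.sum_const, nsmul_eq_mul]
  have hfinal : (A.ncard : ℝ) ≤ 5 * (lam * δ) * (C₁ * ((2 : ℝ) ^ ε * lam ^ ε)) := by
    calc (A.ncard : ℝ) ≤ ((I.biUnion (fun n => Stmt2Aux.reps n)).card : ℝ) := hcard1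
      _ ≤ (I.card : ℝ) * (C₁ * ((2 : ℝ) ^ ε * lam ^ ε)) := hsum
      _ ≤ 5 * (lam * δ) * (C₁ * ((2 : ℝ) ^ ε * lam ^ ε)) := by
          apply mul_le_mul_of_nonneg_right hcardI (by positivity)
  have hexp : lam ^ (1 + ε) = lam * lam ^ ε := by
    rw [Real.rpow_add hlam0, Real.rpow_one]
  calc (A.ncard : ℝ) ≤ 5 * (lam * δ) * (C₁ * ((2 : ℝ) ^ ε * lam ^ ε)) := hfinal
    _ = 5 * C₁ * (2 : ℝ) ^ ε * lam ^ (1 + ε) * δ := by rw [hexp]; ring
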